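/- Let α, β, γ, P, Q ∈ ℝ, set δ = (βP − γ)Q − α(Q+1) and Y = (P,Q), and define σ : ℝ² → ℝ² by σ(u,v) = (u,v) + z·((u,v) − Y) where z = −1 + α/((α+γ)v − βQu + δ). Then: (i) σ is an involution: σ(σ(u,v)) = (u,v) for every (u,v) at which the denominators (α+γ)v − βQu + δ at (u,v) and at σ(u,v) are nonzero; (ii) if S(u,v) = Au+Bv+C and T(u,v) = Du+Ev+F are linear polynomials with AE ≠ BD whose common zero is Y = (P,Q) (i.e. P = (BF−CE)/(AE−BD) and Q = (CD−AF)/(AE−BD)), then σ leaves the ratio S/T invariant: S(σ(u,v))·T(u,v) = S(u,v)·T(σ(u,v)) wherever σ is defined. -/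

import Mathlib

/-- the fractional linear symmetry switch
`σ(u,v) = (u,v) + z·((u,v) − Y)`, `z = −1 + α/((α+γ)v − βQu + δ)`,
`δ = (βP−γ)Q − α(Q+1)`, `Y = (P,Q)`:
(i) `σ` is an involution wherever defined;
(ii) if `S = Au+Bv+C` and `T = Du+Ev+F` are linear forms with `AE ≠ BD` whose common
zero is `Y`, then `σ` leaves the ratio `S/T` invariant. -/
theorem fractional_linear_switch_properties
    (α β γ P Q : ℝ) (δ : ℝ) (hδ : δ = (β * P - γ) * Q - α * (Q + 1))
    (σ : ℝ × ℝ → ℝ × ℝ)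
    (hσ : ∀ u v : ℝ,
      σ (u, v) = (u, v) + (-1 + α / ((α + γ) * v - β * Q * u + δ)) • ((u, v) - (P, Q))) :
    (∀ u v : ℝ,
        (α + γ) * v - β * Q * u + δ ≠ 0 →
        (α + γ) * (σ (u, v)).2 - β * Q * (σ (u, v)).1 + δ ≠ 0 →
        σ (σ (u, v)) = (u, v)) ∧
      (∀ A B C D E F : ℝ, A * E ≠ B * D →
        P = (B * F - C * E) / (A * E - B * D) →
        Q = (C * D - A * F) / (A * E - B * D) →
        ∀ u v : ℝ, (α + γ) * v - β * Q * u + δ ≠ 0 →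
          (A * (σ (u, v)).1 + B * (σ (u, v)).2 + C) * (D * u + E * v + F) =
            (A * u + B * v + C) * (D * (σ (u, v)).1 + E * (σ (u, v)).2 + F)) := by
  have hco : ∀ u v : ℝ, σ (u, v) =
      (u + (-1 + α / ((α + γ) * v - β * Q * u + δ)) * (u - P),
       v + (-1 + α / ((α + γ) * v - β * Q * u + δ)) * (v - Q)) := by
    intro u v
    rw [hσ u v]
    simp [Prod.ext_iff, smul_eq_mul]
  subst hδ
  constructor
  · intro u v h1 h2
    rw [hco u v] at h2 ⊢
    simp only at h2
    rw [hco]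
    set L := (α + γ) * v - β * Q * u + ((β * P - γ) * Q - α * (Q + 1)) with hL
    have key : (α + γ) * (v + (-1 + α / L) * (v - Q)) -
        β * Q * (u + (-1 + α / L) * (u - P)) + ((β * P - γ) * Q - α * (Q + 1))
        = α ^ 2 / L := by
      field_simp
      ring
    rw [key] at h2 ⊢
    have hα : α ≠ 0 := by
      intro h0
      apply h2
      rw [h0]
      simp
    apply Prod.ext <;> simp only <;> field_simp [h1, hα] <;> ring
  · intro A B C D E F hAE hP hQ u v h1
    have hk : A * E - B * D ≠ 0 := sub_ne_zero.mpr hAE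
    have hPQ1 : A * P + B * Q + C = 0 := by
      rw [hP, hQ]; field_simp; ring
    have hPQ2 : D * P + E * Q + F = 0 := by
      rw [hP, hQ]; linear_combination (-F) * mul_inv_cancel₀ hk
    have hC : C = -(A * P) - B * Q := by linarith
    have hF : F = -(D * P) - E * Q := by linarith
    subst hC hF
    rw [hco u v]
    simp only
    field_simp
    ring
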